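/- Let n and r be positive integers, let L : ℝ → (n×n real matrices) be continuous in t (the time-dependent linearized operator of a dynamical system), and let q_1, …, q_r : ℝ → ℝ^n be differentiable curves satisfying the optimally time-dependent (OTD) evolution equations q_i'(t) = L(t)·q_i(t) − Σ_{j=1}^{r} ⟨L(t)·q_i(t), q_j(t)⟩ · q_j(t) for all t ∈ ℝ and all i, where ⟨·,·⟩ is the standard Euclidean inner product on ℝ^n. If the initial vectors are orthonormal, i.e., ⟨q_i(0), q_j(0)⟩ = δ_ij for all i, j, then the vectors remain orthonormal for all time: ⟨q_i(t), q_j(t)⟩ = δ_ij for every t ∈ ℝ and all i, j. -/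

import Mathlib

open Matrix

section Aux

variable {n r : ℕ}

/-- The Lipschitz-type entrywise bound for the Gram-matrix vector field. -/
lemma aux_lipschitz (r : ℕ) (C : ℝ) (hC : 0 ≤ C) (c : Fin r → Fin r → ℝ)
    (hc : ∀ i j, |c i j| ≤ C) :
    LipschitzWith (2 * r * C).toNNReal
      (fun M : Fin r → Fin r → ℝ => fun i j =>
        c i j + c j i - ∑ k, c i k * M k j - ∑ k, c j k * M i k) := by
  apply LipschitzWith.of_dist_le_mul
  intro M M'
  rw [dist_eq_norm, dist_eq_norm]
  have h2 : (0:ℝ) ≤ (2 * r * C).toNNReal * ‖M - M'‖ := by positivity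
  rw [pi_norm_le_iff_of_nonneg h2]
  intro i
  rw [pi_norm_le_iff_of_nonneg h2]
  intro j
  have hD : ∀ a b : Fin r, |M a b - M' a b| ≤ ‖M - M'‖ := by
    intro a b
    calc |M a b - M' a b| = ‖(M - M') a b‖ := by simp [Pi.sub_apply]
    _ ≤ ‖(M - M') a‖ := norm_le_pi_norm _ b
    _ ≤ ‖M - M'‖ := norm_le_pi_norm _ a
  simp only [Pi.sub_apply]
  have key : ((c i j + c j i - ∑ k, c i k * M k j - ∑ k, c j k * M i k) -
      (c i j + c j i - ∑ k, c i k * M' k j - ∑ k, c j k * M' i k)) =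
      -(∑ k, c i k * (M k j - M' k j)) - (∑ k, c j k * (M i k - M' i k)) := by
    simp only [mul_sub, Finset.sum_sub_distrib]
    ring
  rw [Real.norm_eq_abs, key]
  have b1 : |∑ k, c i k * (M k j - M' k j)| ≤ (r : ℝ) * C * ‖M - M'‖ := by
    calc |∑ k, c i k * (M k j - M' k j)| ≤ ∑ k, |c i k * (M k j - M' k j)| :=
      Finset.abs_sum_le_sum_abs _ _
    _ ≤ ∑ _k : Fin r, C * ‖M - M'‖ := by
        apply Finset.sum_le_sum
        intro k _
        rw [abs_mul]
        exact mul_le_mul (hc i k) (hD k j) (abs_nonneg _) hC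
    _ = (r : ℝ) * C * ‖M - M'‖ := by simp [Finset.sum_const]; ring
  have b2 : |∑ k, c j k * (M i k - M' i k)| ≤ (r : ℝ) * C * ‖M - M'‖ := by
    calc |∑ k, c j k * (M i k - M' i k)| ≤ ∑ k, |c j k * (M i k - M' i k)| :=
      Finset.abs_sum_le_sum_abs _ _
    _ ≤ ∑ _k : Fin r, C * ‖M - M'‖ := by
        apply Finset.sum_le_sum
        intro k _
        rw [abs_mul]
        exact mul_le_mul (hc j k) (hD i k) (abs_nonneg _) hC
    _ = (r : ℝ) * C * ‖M - M'‖ := by simp [Finset.sum_const]; ring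
  have htn : ((2 * r * C).toNNReal : ℝ) = 2 * r * C := by
    rw [Real.coe_toNNReal]; positivity
  rw [htn]
  calc |-(∑ k, c i k * (M k j - M' k j)) - ∑ k, c j k * (M i k - M' i k)|
      ≤ |∑ k, c i k * (M k j - M' k j)| + |∑ k, c j k * (M i k - M' i k)| := by
        have h : -(∑ k, c i k * (M k j - M' k j)) - ∑ k, c j k * (M i k - M' i k)
            = -((∑ k, c i k * (M k j - M' k j)) + ∑ k, c j k * (M i k - M' i k)) := by ring
        rw [h, abs_neg]
        exact abs_add_le _ _
    _ ≤ (r : ℝ) * C * ‖M - M'‖ + (r : ℝ) * C * ‖M - M'‖ := add_le_add b1 b2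
    _ = 2 * r * C * ‖M - M'‖ := by ring

end Aux

/-- Let `L : ℝ → Matrix (Fin n) (Fin n) ℝ` be continuous, and let
`q₁, …, q_r : ℝ → ℝⁿ` be differentiable curves satisfying the OTD evolution equations
`qᵢ' = L qᵢ - ∑ⱼ ⟨L qᵢ, qⱼ⟩ qⱼ` (Euclidean inner product `⟨u,v⟩ = ∑ k, u k * v k`).
If the initial vectors are orthonormal, they remain orthonormal for all time. -/
theorem stmt_16 (n r : ℕ) (hn : 0 < n) (hr : 0 < r)
    (L : ℝ → Matrix (Fin n) (Fin n) ℝ) (hL : Continuous L)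
    (q : Fin r → ℝ → (Fin n → ℝ))
    (hq : ∀ i t, HasDerivAt (q i)
      ((L t).mulVec (q i t) -
        ∑ j, (∑ k, (L t).mulVec (q i t) k * q j t k) • q j t) t)
    (h0 : ∀ i j, ∑ k, q i 0 k * q j 0 k = if i = j then (1 : ℝ) else 0) :
    ∀ t : ℝ, ∀ i j, ∑ k, q i t k * q j t k = if i = j then (1 : ℝ) else 0 := by
  -- continuity of the curves
  have hqc : ∀ i, Continuous (q i) := fun i =>
    continuous_iff_continuousAt.mpr fun t => (hq i t).continuousAt
  -- the coefficients c t i j = ⟨L t (q i t), q j t⟩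
  set c : ℝ → Fin r → Fin r → ℝ :=
    fun t i j => ∑ k, (L t).mulVec (q i t) k * q j t k with hcdef
  have hcc : ∀ i j, Continuous (fun t => c t i j) := by
    intro i j
    apply continuous_finset_sum
    intro k _
    apply Continuous.mul
    · simp only [Matrix.mulVec, dotProduct]
      apply continuous_finset_sum
      intro m _
      exact ((continuous_apply m).comp ((continuous_apply k).comp hL)).mul
        ((continuous_apply m).comp (hqc i))
    · exact (continuous_apply k).comp (hqc j)
  -- the Gram matrix
  set G : ℝ → Fin r → Fin r → ℝ := fun t i j => ∑ k, q i t k * q j t k with hGdef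
  -- entrywise derivative of the curves
  have hqk : ∀ i t k, HasDerivAt (fun s => q i s k)
      ((L t).mulVec (q i t) k - ∑ j, c t i j * q j t k) t := by
    intro i t k
    have := hasDerivAt_pi.mp (hq i t) k
    convert this using 1
    · rfl
    · rfl
    simp [Finset.sum_apply, Pi.sub_apply]
    rfl
  -- derivative of a Gram entry
  have hGentry : ∀ t i j, HasDerivAt (fun s => G s i j)
      (c t i j + c t j i - ∑ k, c t i k * G t k j - ∑ k, c t j k * G t i k) t := by
    intro t i j
    have h1 : HasDerivAt (fun s => ∑ k, q i s k * q j s k)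
        (∑ k, (((L t).mulVec (q i t) k - ∑ j', c t i j' * q j' t k) * q j t k +
          q i t k * ((L t).mulVec (q j t) k - ∑ j', c t j j' * q j' t k))) t := by
      apply HasDerivAt.fun_sum
      intro k _
      exact (hqk i t k).mul (hqk j t k)
    have s1 : ∑ x : Fin n, (∑ j' : Fin r, c t i j' * q j' t x) * q j t x
        = ∑ j' : Fin r, c t i j' * G t j' j := by
      simp only [Finset.sum_mul]
      rw [Finset.sum_comm]
      refine Finset.sum_congr rfl fun j' _ => ?_
      rw [Finset.mul_sum]
      exact Finset.sum_congr rfl fun x _ => by ring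
    have s2 : ∑ x : Fin n, q i t x * (∑ j' : Fin r, c t j j' * q j' t x)
        = ∑ j' : Fin r, c t j j' * G t i j' := by
      simp only [Finset.mul_sum]
      rw [Finset.sum_comm]
      refine Finset.sum_congr rfl fun j' _ => ?_
      rw [Finset.mul_sum]
      exact Finset.sum_congr rfl fun x _ => by ring
    have s3 : ∑ x : Fin n, (L t).mulVec (q i t) x * q j t x = c t i j := rfl
    have s4 : ∑ x : Fin n, q i t x * (L t).mulVec (q j t) x = c t j i := by
      show _ = ∑ k : Fin n, (L t).mulVec (q j t) k * q i t k
      exact Finset.sum_congr rfl fun x _ => by ring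
    have heq : (∑ k, (((L t).mulVec (q i t) k - ∑ j', c t i j' * q j' t k) * q j t k +
          q i t k * ((L t).mulVec (q j t) k - ∑ j', c t j j' * q j' t k)))
        = c t i j + c t j i - ∑ k, c t i k * G t k j - ∑ k, c t j k * G t i k := by
      simp only [sub_mul, mul_sub, Finset.sum_add_distrib, Finset.sum_sub_distrib]
      rw [s1, s2, s3, s4]
      ring
    exact heq ▸ h1
  -- main claim: G t = identity for all t
  suffices hmain : ∀ t : ℝ, G t = fun i j => if i = j then (1:ℝ) else 0 by
    intro t i j
    have := congrFun (congrFun (hmain t) i) j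
    simpa [hGdef] using this
  intro T
  -- work on the compact interval [a, b]
  set a : ℝ := -(|T| + 1) with ha
  set b : ℝ := |T| + 1 with hb
  have hab : a < b := by
    have : (0:ℝ) < |T| + 1 := by positivity
    simp only [ha, hb]; linarith
  have hT : T ∈ Set.Icc a b := by
    constructor
    · simp only [ha]; have := neg_abs_le T; linarith
    · simp only [hb]; have := le_abs_self T; linarith
  have h0ab : (0:ℝ) ∈ Set.Ioo a b := by
    constructor
    · simp only [ha]; have : (0:ℝ) ≤ |T| := abs_nonneg T; linarith
    · simp only [hb]; have : (0:ℝ) ≤ |T| := abs_nonneg T; linarith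
  -- clamp to [a, b]
  set clamp : ℝ → ℝ := fun s => max a (min b s) with hclamp
  have hclamp_mem : ∀ s, clamp s ∈ Set.Icc a b := by
    intro s
    constructor
    · exact le_max_left _ _
    · simp only [hclamp, max_le_iff]
      exact ⟨le_of_lt hab, min_le_left _ _⟩
  have hclamp_id : ∀ s ∈ Set.Ioo a b, clamp s = s := by
    intro s hs
    simp only [hclamp]
    rw [min_eq_right (le_of_lt hs.2), max_eq_right (le_of_lt hs.1)]
  -- bound on coefficients over [a, b]
  have hcbound : ∃ C : ℝ, 0 ≤ C ∧ ∀ s ∈ Set.Icc a b, ∀ i j, |c s i j| ≤ C := by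
    have hcompact : IsCompact (Set.Icc a b) := isCompact_Icc
    have : ∃ C, ∀ s ∈ Set.Icc a b, ‖∑ i : Fin r, ∑ j : Fin r, |c s i j|‖ ≤ C := by
      apply hcompact.exists_bound_of_continuousOn
      apply Continuous.continuousOn
      apply continuous_finset_sum; intro i _
      apply continuous_finset_sum; intro j _
      exact (hcc i j).abs
    obtain ⟨C, hC⟩ := this
    refine ⟨max C 0, le_max_right _ _, fun s hs i j => ?_⟩
    have h1 := hC s hs
    have h2 : |c s i j| ≤ ∑ i : Fin r, ∑ j : Fin r, |c s i j| := by
      have hrow : |c s i j| ≤ ∑ j' : Fin r, |c s i j'| :=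
        Finset.single_le_sum (f := fun k => |c s i k|)
          (fun k _ => abs_nonneg _) (Finset.mem_univ j)
      refine le_trans hrow ?_
      exact Finset.single_le_sum (f := fun i' => ∑ j' : Fin r, |c s i' j'|)
        (fun k _ => Finset.sum_nonneg fun m _ => abs_nonneg _) (Finset.mem_univ i)
    refine le_trans h2 (le_trans (le_trans (le_abs_self _) ?_) (le_max_left _ _))
    exact h1
  obtain ⟨C, hC0, hCb⟩ := hcbound
  -- the vector field (with clamped time so that it is globally Lipschitz)
  set v : ℝ → (Fin r → Fin r → ℝ) → (Fin r → Fin r → ℝ) :=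
    fun s M => fun i j => c (clamp s) i j + c (clamp s) j i -
      ∑ k, c (clamp s) i k * M k j - ∑ k, c (clamp s) j k * M i k with hv
  have hlip : ∀ s, LipschitzWith (2 * r * C).toNNReal (v s) := by
    intro s
    exact aux_lipschitz r C hC0 (c (clamp s))
      (fun i j => hCb (clamp s) (hclamp_mem s) i j)
  -- G solves the ODE on Ioo a b
  have hGode : ∀ s ∈ Set.Ioo a b, HasDerivAt G (v s (G s)) s := by
    intro s hs
    rw [hasDerivAt_pi]
    intro i
    rw [hasDerivAt_pi]
    intro j
    have := hGentry s i j
    convert this using 1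
    · rfl
    · rfl
    simp only [hv, hclamp_id s hs]
  -- the constant identity solves the ODE
  have hIode : ∀ s ∈ Set.Ioo a b,
      HasDerivAt (fun _ : ℝ => (fun i j => if i = j then (1:ℝ) else 0 : Fin r → Fin r → ℝ))
        (v s (fun i j => if i = j then (1:ℝ) else 0)) s := by
    intro s _
    have hz : v s (fun i j => if i = j then (1:ℝ) else 0) = 0 := by
      funext i j
      simp only [hv]
      have e1 : ∑ k, c (clamp s) i k * (if k = j then (1:ℝ) else 0) = c (clamp s) i j := by
        simp [mul_ite]
      have e2 : ∑ k, c (clamp s) j k * (if i = k then (1:ℝ) else 0) = c (clamp s) j i := by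
        simp [mul_ite]
      rw [e1, e2]
      simp only [Pi.zero_apply]
      ring
    rw [hz]
    exact hasDerivAt_const s _
  have hGcont : Continuous G :=
    continuous_pi fun i => continuous_pi fun j =>
      continuous_iff_continuousAt.mpr fun u => (hGentry u i j).continuousAt
  -- ODE uniqueness
  have hG0 : G 0 = fun i j => if i = j then (1:ℝ) else 0 := by
    funext i j
    exact h0 i j
  have huniq := ODE_solution_unique_of_mem_Icc (K := (2 * r * C).toNNReal)
    (v := v) (s := fun _ => Set.univ) (f := G)
    (g := fun _ => (fun i j => if i = j then (1:ℝ) else 0 : Fin r → Fin r → ℝ))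
    (t₀ := 0) (a := a) (b := b)
    (fun s _ => (hlip s).lipschitzOnWith)
    h0ab
    hGcont.continuousOn
    hGode (fun _ _ => Set.mem_univ _)
    continuousOn_const
    hIode (fun _ _ => Set.mem_univ _)
    hG0
  exact huniq hT
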